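/- If x satisfies x₀ − g₀ ≤ min(x_j − g_j : j ∈ supp(g)\{0}) for a fixed g, then for any λ,μ ∈ 𝕋_max and any y with λ + x₀ ≥ μ + y₀, the max-tropical combination z with z_k = max(λ + x_k, μ + y_k) also satisfies z₀ − g₀ ≤ min(z_j − g_j : j ∈ supp(g)\{0}). -/

import Mathlib

/-- If `x` satisfies `x₀ - g₀ ≤ min (x_j - g_j : j ∈ supp(g)\{0})` (expressed as
`x₀ + g_j ≤ x_j + g₀` to avoid subtraction in `𝕋_max = WithBot ℝ`), then for any
`λ, μ ∈ 𝕋_max` and any `y` with `λ + x₀ ≥ μ + y₀`, the max-tropical combination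
`z = (max (λ + x_k, μ + y_k))_k` satisfies the same inequality. -/
theorem maxTropCombination_in_sector {d : ℕ} (g x y : Fin (d + 1) → WithBot ℝ)
    (hg0 : g 0 ≠ ⊥)
    (hx : ∀ j, j ≠ 0 → g j ≠ ⊥ → x 0 + g j ≤ x j + g 0)
    (lam mu : WithBot ℝ) (h0 : mu + y 0 ≤ lam + x 0) :
    ∀ j, j ≠ 0 → g j ≠ ⊥ →
      (max (lam + x 0) (mu + y 0)) + g j ≤ (max (lam + x j) (mu + y j)) + g 0 := by
  intro j hj hgj
  rw [max_eq_left h0]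
  calc lam + x 0 + g j = lam + (x 0 + g j) := by rw [add_assoc]
    _ ≤ lam + (x j + g 0) := add_le_add_right (hx j hj hgj) lam
    _ = lam + x j + g 0 := (add_assoc _ _ _).symm
    _ ≤ max (lam + x j) (mu + y j) + g 0 := add_le_add_left (le_max_left _ _) _
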